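/- arXiv:2307.12264 — 2 statements merged into one kernel-verified Lean document; each statement's English description precedes it below -/
import Mathlib

section
/- Let $h(u) = \log_2\left(\sigma^2 + \sum_{j \in J} \frac{p_j \omega_j}{H^2 + u_j}\right)$ for $u \in \mathbb{R}_{\geq 0}^J$, with $\sigma^2, H > 0$ and $p_j, \omega_j > 0$. Then for any point $u^{(r)} \in \mathbb{R}_{\geq 0}^J$, $h(u) \geq h(u^{(r)}) - \sum_j \frac{p_j \omega_j}{(H^2 + u_j^{(r)})^2 (\sigma^2 + \sum_{j'} \frac{p_{j'}\omega_{j'}}{H^2 + u_{j'}^{(r)}})\ln 2}(u_j - u_j^{(r)})$. -/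
noncomputable def log2 (x : ℝ) : ℝ := Real.log x / Real.log 2

/-- First-order Taylor lower bound (Proposition 2, eq. (40)) for
`h(u) = log₂(σ² + ∑_j p_j ω_j / (H² + u_j))` on the nonnegative orthant. -/
theorem stmt_8 (J : Type*) [Fintype J] (σ2 H : ℝ) (p ω : J → ℝ)
    (hσ : 0 < σ2) (hH : 0 < H) (hp : ∀ j, 0 < p j) (hω : ∀ j, 0 < ω j)
    (h : (J → ℝ) → ℝ)
    (hdef : ∀ u : J → ℝ, h u = log2 (σ2 + ∑ j, p j * ω j / (H ^ 2 + u j))) :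
    ∀ ur ∈ {u : J → ℝ | ∀ j, 0 ≤ u j}, ∀ u ∈ {u : J → ℝ | ∀ j, 0 ≤ u j},
      h u ≥ h ur - ∑ j,
        (p j * ω j / ((H ^ 2 + ur j) ^ 2 *
          (σ2 + ∑ j', p j' * ω j' / (H ^ 2 + ur j')) * Real.log 2)) *
        (u j - ur j) := by
  intro ur hur u hu
  simp only [Set.mem_setOf_eq] at hur hu
  have hL : 0 < Real.log 2 := Real.log_pos one_lt_two
  have hH2 : 0 < H ^ 2 := by positivity
  have hapos : ∀ j, 0 < p j * ω j := fun j => mul_pos (hp j) (hω j)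
  set g : J → ℝ → ℝ := fun j t => (H ^ 2 + ur j) + t * (u j - ur j) with hgdef
  set F : ℝ → ℝ := fun t => σ2 + ∑ j, p j * ω j / g j t with hFdef
  set P : ℝ → ℝ := fun t => ∑ j, p j * ω j * (u j - ur j) / (g j t) ^ 2 with hPdef
  set R : ℝ → ℝ := fun t => ∑ j, p j * ω j * (u j - ur j) ^ 2 / (g j t) ^ 3 with hRdef
  have hgpos : ∀ (j : J), ∀ t ∈ Set.Icc (0:ℝ) 1, 0 < g j t := by
    intro j t ht
    have h1 : g j t = H ^ 2 + ((1 - t) * ur j + t * u j) := by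
      simp only [hgdef]; ring
    have h2 : 0 ≤ (1 - t) * ur j := mul_nonneg (by linarith [ht.2]) (hur j)
    have h3 : 0 ≤ t * u j := mul_nonneg ht.1 (hu j)
    rw [h1]; linarith
  have hFpos : ∀ t ∈ Set.Icc (0:ℝ) 1, 0 < F t := by
    intro t ht
    have : (0:ℝ) ≤ ∑ j, p j * ω j / g j t :=
      Finset.sum_nonneg fun j _ => le_of_lt (div_pos (hapos j) (hgpos j t ht))
    simp only [hFdef]; linarith
  have hRnonneg : ∀ t ∈ Set.Icc (0:ℝ) 1, 0 ≤ R t := by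
    intro t ht
    exact Finset.sum_nonneg fun j _ => div_nonneg
      (mul_nonneg (le_of_lt (hapos j)) (sq_nonneg _)) (le_of_lt (pow_pos (hgpos j t ht) 3))
  have hgd : ∀ (j : J) (t : ℝ), HasDerivAt (g j) (u j - ur j) t := by
    intro j t
    have := ((hasDerivAt_id t).mul_const (u j - ur j)).const_add (H ^ 2 + ur j)
    simp only [one_mul] at this
    exact this
  -- derivative of F
  have hFd : ∀ t ∈ Set.Icc (0:ℝ) 1, HasDerivAt F (-(P t)) t := by
    intro t ht
    have hterm : ∀ j : J, HasDerivAt (fun s => p j * ω j / g j s)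
        (-(p j * ω j * (u j - ur j) / (g j t) ^ 2)) t := by
      intro j
      have hgne := ne_of_gt (hgpos j t ht)
      have h2 := (hasDerivAt_const t (p j * ω j)).fun_div (hgd j t) hgne
      refine h2.congr_deriv ?_
      field_simp
      ring
    have hsum := HasDerivAt.fun_sum (fun j (_ : j ∈ Finset.univ) => hterm j)
    have h3 := hsum.const_add σ2
    refine h3.congr_deriv ?_
    simp only [hPdef]
    rw [← Finset.sum_neg_distrib]
  -- derivative of P
  have hPd : ∀ t ∈ Set.Icc (0:ℝ) 1, HasDerivAt P (-(2 * R t)) t := by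
    intro t ht
    have hterm : ∀ j : J, HasDerivAt (fun s => p j * ω j * (u j - ur j) / (g j s) ^ 2)
        (-(2 * (p j * ω j * (u j - ur j) ^ 2 / (g j t) ^ 3))) t := by
      intro j
      have hgne := ne_of_gt (hgpos j t ht)
      have hpow : HasDerivAt (fun s => (g j s) ^ 2)
          (2 * (g j t) ^ 1 * (u j - ur j)) t := by
        simpa using (hgd j t).fun_pow 2
      have h2 := (hasDerivAt_const t (p j * ω j * (u j - ur j))).fun_div hpow
        (pow_ne_zero 2 hgne)
      refine h2.congr_deriv ?_
      field_simp
      ring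
    have hsum := HasDerivAt.fun_sum (fun j (_ : j ∈ Finset.univ) => hterm j)
    refine hsum.congr_deriv ?_
    simp only [hRdef]
    rw [Finset.mul_sum, ← Finset.sum_neg_distrib]
  -- derivative of φ = log ∘ F
  have hφd : ∀ t ∈ Set.Icc (0:ℝ) 1,
      HasDerivAt (fun s => Real.log (F s)) (-(P t) / F t) t := by
    intro t ht
    exact (hFd t ht).log (ne_of_gt (hFpos t ht))
  -- derivative of ψ = -P/F
  have hψd : ∀ t ∈ Set.Icc (0:ℝ) 1,
      HasDerivAt (fun s => -(P s) / F s)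
        ((2 * R t * F t - (P t) ^ 2) / (F t) ^ 2) t := by
    intro t ht
    have h2 := ((hPd t ht).fun_neg).fun_div (hFd t ht) (ne_of_gt (hFpos t ht))
    refine h2.congr_deriv ?_
    ring
  -- Cauchy–Schwarz: P t ^ 2 ≤ 2 * R t * F t
  have hCS : ∀ t ∈ Set.Icc (0:ℝ) 1, (P t) ^ 2 ≤ 2 * R t * F t := by
    intro t ht
    have key := Finset.sum_mul_sq_le_sq_mul_sq Finset.univ
      (fun j => Real.sqrt (p j * ω j / g j t))
      (fun j => Real.sqrt (p j * ω j / (g j t) ^ 3) * (u j - ur j))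
    have e1 : ∀ j : J, Real.sqrt (p j * ω j / g j t) *
        (Real.sqrt (p j * ω j / (g j t) ^ 3) * (u j - ur j)) =
        p j * ω j * (u j - ur j) / (g j t) ^ 2 := by
      intro j
      have hgp := hgpos j t ht
      have hap := hapos j
      have : Real.sqrt (p j * ω j / g j t) * Real.sqrt (p j * ω j / (g j t) ^ 3) =
          p j * ω j / (g j t) ^ 2 := by
        rw [← Real.sqrt_mul (by positivity)]
        rw [show p j * ω j / g j t * (p j * ω j / (g j t) ^ 3) =
          (p j * ω j / (g j t) ^ 2) ^ 2 by field_simp]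
        exact Real.sqrt_sq (by positivity)
      rw [← mul_assoc, this]; ring
    have e2 : ∀ j : J, (Real.sqrt (p j * ω j / g j t)) ^ 2 = p j * ω j / g j t := by
      intro j
      exact Real.sq_sqrt (le_of_lt (div_pos (hapos j) (hgpos j t ht)))
    have e3 : ∀ j : J, (Real.sqrt (p j * ω j / (g j t) ^ 3) * (u j - ur j)) ^ 2 =
        p j * ω j * (u j - ur j) ^ 2 / (g j t) ^ 3 := by
      intro j
      rw [mul_pow, Real.sq_sqrt (le_of_lt (div_pos (hapos j) (pow_pos (hgpos j t ht) 3)))]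
      ring
    rw [Finset.sum_congr rfl (fun j _ => e1 j), Finset.sum_congr rfl (fun j _ => e2 j),
      Finset.sum_congr rfl (fun j _ => e3 j)] at key
    have hsumle : (∑ j, p j * ω j / g j t) ≤ F t := by
      simp only [hFdef]; linarith
    have hRt := hRnonneg t ht
    have hFt := hFpos t ht
    have : (P t) ^ 2 ≤ F t * R t := by
      calc (P t) ^ 2 ≤ (∑ j, p j * ω j / g j t) * R t := key
        _ ≤ F t * R t := mul_le_mul_of_nonneg_right hsumle hRt
    nlinarith
  -- ψ' nonneg
  have hψ'nonneg : ∀ t ∈ Set.Icc (0:ℝ) 1,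
      0 ≤ (2 * R t * F t - (P t) ^ 2) / (F t) ^ 2 := by
    intro t ht
    exact div_nonneg (by linarith [hCS t ht]) (sq_nonneg _)
  -- MVT for φ on [0,1]
  have h01 : (0:ℝ) < 1 := one_pos
  obtain ⟨c, hc, hceq⟩ := exists_hasDerivAt_eq_slope (fun s => Real.log (F s))
    (fun t => -(P t) / F t) h01
    (fun t ht => ((hφd t ht).continuousAt).continuousWithinAt)
    (fun t ht => hφd t (Set.mem_Icc.mpr ⟨le_of_lt ht.1, le_of_lt ht.2⟩))
  have hcIcc : c ∈ Set.Icc (0:ℝ) 1 := ⟨le_of_lt hc.1, le_of_lt hc.2⟩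
  -- MVT for ψ on [0,c]
  have hsub : Set.Icc (0:ℝ) c ⊆ Set.Icc (0:ℝ) 1 :=
    Set.Icc_subset_Icc le_rfl (le_of_lt hc.2)
  obtain ⟨c', hc', hc'eq⟩ := exists_hasDerivAt_eq_slope (fun s => -(P s) / F s)
    (fun t => (2 * R t * F t - (P t) ^ 2) / (F t) ^ 2) hc.1
    (fun t ht => ((hψd t (hsub ht)).continuousAt).continuousWithinAt)
    (fun t ht => hψd t (hsub ⟨le_of_lt ht.1, le_of_lt ht.2⟩))
  have hc'Icc : c' ∈ Set.Icc (0:ℝ) 1 := hsub ⟨le_of_lt hc'.1, le_of_lt hc'.2⟩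
  -- ψ c ≥ ψ 0
  have hψmono : -(P 0) / F 0 ≤ -(P c) / F c := by
    have h1 := hψ'nonneg c' hc'Icc
    rw [hc'eq] at h1
    have h2 : 0 < c - 0 := by linarith [hc.1]
    have := (div_nonneg_iff.mp h1)
    rcases this with ⟨hn, _⟩ | ⟨_, hd⟩
    · linarith
    · linarith
  -- combine: log (F 1) - log (F 0) ≥ -(P 0)/F 0
  have hkey : -(P 0) / F 0 ≤ Real.log (F 1) - Real.log (F 0) := by
    have : -(P c) / F c = Real.log (F 1) - Real.log (F 0) := by
      rw [hceq]; simp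
    linarith [hψmono, this.symm.le, this.le]
  -- identify F 1 and F 0 with the statement's expressions
  have h0Icc : (0:ℝ) ∈ Set.Icc (0:ℝ) 1 := ⟨le_rfl, zero_le_one⟩
  have hF1 : F 1 = σ2 + ∑ j, p j * ω j / (H ^ 2 + u j) := by
    simp only [hFdef]
    congr 1
    apply Finset.sum_congr rfl
    intro j _
    congr 1
    simp only [hgdef]; ring
  have hF0 : F 0 = σ2 + ∑ j', p j' * ω j' / (H ^ 2 + ur j') := by
    simp only [hFdef]
    congr 1
    apply Finset.sum_congr rfl
    intro j _
    congr 1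
    simp only [hgdef]; ring
  have hF0pos : 0 < F 0 := hFpos 0 h0Icc
  -- rewrite the statement's sum
  have hsum : (∑ j, (p j * ω j / ((H ^ 2 + ur j) ^ 2 *
      (σ2 + ∑ j', p j' * ω j' / (H ^ 2 + ur j')) * Real.log 2)) * (u j - ur j)) =
      P 0 / (F 0 * Real.log 2) := by
    simp only [hPdef]
    rw [Finset.sum_div]
    apply Finset.sum_congr rfl
    intro j _
    have hg0 : g j 0 = H ^ 2 + ur j := by simp only [hgdef]; ring
    rw [hg0, ← hF0, div_mul_eq_mul_div, div_div,
      mul_assoc ((H ^ 2 + ur j) ^ 2) (F 0) (Real.log 2)]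
  rw [hdef u, hdef ur, hsum, log2, log2, hF1.symm, hF0.symm]
  rw [ge_iff_le]
  have hF0ne : F 0 ≠ 0 := ne_of_gt hF0pos
  have hLne : Real.log 2 ≠ 0 := ne_of_gt hL
  have e : Real.log (F 0) / Real.log 2 - P 0 / (F 0 * Real.log 2) =
      (Real.log (F 0) - P 0 / F 0) / Real.log 2 := by
    rw [sub_div, div_div]
  rw [e]
  have hfin : Real.log (F 0) - P 0 / F 0 ≤ Real.log (F 1) := by
    have h2 := hkey
    rw [neg_div] at h2
    linarith
  exact (div_le_div_iff_of_pos_right hL).mpr hfin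
end

section
/- For $p \in \mathbb{R}_{\geq 0}^J$ and any feasible point satisfying the SCA-approximated constraint $\hat\Lambda(p) - F^{(r)} - \sum_{j \neq k} G^{(r)}_j (p_j - p_j^{(r)}) \geq \eta$, the original constraint $\log_2(1 + \frac{p_k h_k}{\sigma^2 + \sum_{j\neq k} p_j h_j}) \geq \eta$ also holds, where $\hat\Lambda(p) = \log_2(\sigma^2 + \sum_j p_j h_j)$, $F^{(r)} = \log_2(\sigma^2 + \sum_{j\neq k} p_j^{(r)} h_j)$, and $G^{(r)}_j = \frac{h_j}{(\sigma^2 + \sum_{j'\neq k} p_{j'}^{(r)} h_{j'})\ln 2}$. -/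
/-- The SCA-approximated feasible region is a subset of the original one
(Proposition 1 / eq. (29)): if
`Λ̂(p) - F⁽ʳ⁾ - ∑_{j≠k} G_j⁽ʳ⁾ (p_j - p_j⁽ʳ⁾) ≥ η`
then `log₂(1 + p_k h_k / (σ² + ∑_{j≠k} p_j h_j)) ≥ η`. -/
theorem stmt_15 (J : Type*) [Fintype J] [DecidableEq J] (k : J)
    (σ2 η : ℝ) (h p pr : J → ℝ)
    (hσ : 0 < σ2) (hh : ∀ j, 0 < h j) (hp : ∀ j, 0 ≤ p j) (hpr : ∀ j, 0 ≤ pr j)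
    (happrox :
      log2 (σ2 + ∑ j, p j * h j) -
        log2 (σ2 + ∑ j ∈ Finset.univ.erase k, pr j * h j) -
        ∑ j ∈ Finset.univ.erase k,
          (h j / ((σ2 + ∑ j' ∈ Finset.univ.erase k, pr j' * h j') * Real.log 2)) *
            (p j - pr j) ≥ η) :
    log2 (1 + p k * h k / (σ2 + ∑ j ∈ Finset.univ.erase k, p j * h j)) ≥ η := by
  set S := ∑ j ∈ Finset.univ.erase k, p j * h j with hS
  set Sr := ∑ j ∈ Finset.univ.erase k, pr j * h j with hSr
  have hSnn : 0 ≤ S := Finset.sum_nonneg fun j _ => mul_nonneg (hp j) (hh j).le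
  have hSrnn : 0 ≤ Sr := Finset.sum_nonneg fun j _ => mul_nonneg (hpr j) (hh j).le
  have hA : 0 < σ2 + S := by linarith
  have hB : 0 < σ2 + Sr := by linarith
  have hlog2 : 0 < Real.log 2 := Real.log_pos (by norm_num)
  -- full sum = p k * h k + S
  have hsum : (∑ j, p j * h j) = p k * h k + S := by
    rw [hS, ← Finset.sum_erase_add _ _ (Finset.mem_univ k)]
    ring
  -- rewrite the target log
  have hq : 1 + p k * h k / (σ2 + S) = (σ2 + ∑ j, p j * h j) / (σ2 + S) := by
    rw [hsum]; field_simp; ring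
  have hfull : 0 < σ2 + ∑ j, p j * h j := by rw [hsum]; nlinarith [mul_nonneg (hp k) (hh k).le]
  have htarget : log2 (1 + p k * h k / (σ2 + S)) =
      log2 (σ2 + ∑ j, p j * h j) - log2 (σ2 + S) := by
    rw [hq]; unfold log2
    rw [Real.log_div (ne_of_gt hfull) (ne_of_gt hA)]
    ring
  -- sum identity: ∑ G_j (p_j - pr_j) = (S - Sr)/((σ2+Sr) log 2)
  have hsum2 : (∑ j ∈ Finset.univ.erase k,
        (h j / ((σ2 + Sr) * Real.log 2)) * (p j - pr j))
      = (S - Sr) / ((σ2 + Sr) * Real.log 2) := by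
    rw [hS, hSr, ← Finset.sum_sub_distrib, Finset.sum_div]
    apply Finset.sum_congr rfl
    intro j _
    field_simp
  -- concavity: log A ≤ log B + (A - B)/B
  have hconc : Real.log (σ2 + S) ≤ Real.log (σ2 + Sr) + (S - Sr) / (σ2 + Sr) := by
    have := Real.log_le_sub_one_of_pos (div_pos hA hB)
    rw [Real.log_div (ne_of_gt hA) (ne_of_gt hB)] at this
    have h2 : ((σ2 + S) / (σ2 + Sr) - 1) = (S - Sr) / (σ2 + Sr) := by
      field_simp
      ring
    linarith [this.trans_eq h2]
  rw [htarget]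
  rw [hsum2] at happrox
  have hd : Real.log (σ2 + S) / Real.log 2 ≤
      (Real.log (σ2 + Sr) + (S - Sr) / (σ2 + Sr)) / Real.log 2 := by
    gcongr
  rw [add_div, div_div] at hd
  unfold log2 at happrox ⊢
  linarith
end
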